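/- Let m ≥ 4 and n ≥ m(m-1)/2 be integers. Then RS_m(n) = ⌈((m-3)n + m(m-1)/2)/(m-2)⌉. -/

import Mathlib

open Finset in
/-- `χ` is an exact `r`-coloring of `[1,n]`: it maps `[1,n]` into the color set `[1,r]`
and uses all `r` colors. -/
def ExactColoring (n r : ℕ) (χ : ℕ → ℕ) : Prop :=
  (∀ x ∈ Finset.Icc 1 n, χ x ∈ Finset.Icc 1 r) ∧
  ∀ c ∈ Finset.Icc 1 r, ∃ x ∈ Finset.Icc 1 n, χ x = c

open Finset in
/-- The tuple `a 1, …, a m` is a solution to `E_m : x₁ + ⋯ + x_{m-1} = x_m` within `[1,n]`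
(repetitions among the entries are allowed). -/
def IsSolutionEm (m n : ℕ) (a : ℕ → ℕ) : Prop :=
  (∀ i ∈ Finset.Icc 1 m, a i ∈ Finset.Icc 1 n) ∧
  ∑ i ∈ Finset.Icc 1 (m - 1), a i = a m

open Finset in
/-- The solution `a 1, …, a m` is rainbow under `χ`: its colors are pairwise distinct. -/
def IsRainbow (m : ℕ) (χ a : ℕ → ℕ) : Prop :=
  ∀ i ∈ Finset.Icc 1 m, ∀ j ∈ Finset.Icc 1 m, i ≠ j → χ (a i) ≠ χ (a j)

open Finset in
/-- The number of distinct colors used by the tuple `a 1, …, a m` under `χ`. -/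
def colorsUsed (m : ℕ) (χ a : ℕ → ℕ) : ℕ :=
  ((Finset.Icc 1 m).image fun i => χ (a i)).card

/-- Every exact `r`-coloring of `[1,n]` contains a rainbow solution to `E_m`. -/
def HasRainbowProp (m n r : ℕ) : Prop :=
  ∀ χ : ℕ → ℕ, ExactColoring n r χ →
    ∃ a : ℕ → ℕ, IsSolutionEm m n a ∧ IsRainbow m χ a

/-- Every exact `r`-coloring of `[1,n]` contains a solution to `E_m` using at least `t` colors. -/
def HasWeakProp (m t n r : ℕ) : Prop :=
  ∀ χ : ℕ → ℕ, ExactColoring n r χ →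
    ∃ a : ℕ → ℕ, IsSolutionEm m n a ∧ t ≤ colorsUsed m χ a

/-! ### Auxiliary lemmas -/

lemma two_dvd_mul_pred (m : ℕ) : 2 ∣ m * (m - 1) := by
  rcases Nat.even_or_odd m with h | h
  · exact Dvd.dvd.mul_right h.two_dvd _
  · rcases m with _ | m
    · simp
    · refine Dvd.dvd.mul_left ?_ _
      have : Even (m + 1 - 1) := Nat.Odd.sub_odd h odd_one
      simpa using this.two_dvd

open Finset in
/-- Sum of distinct naturals, all greater than `s`, is at least
`t*s + t*(t+1)/2` where `t` is how many there are (stated `×2`). -/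
lemma sum_ge_of_forall_lt (s : ℕ) (P : Finset ℕ) (hP : ∀ v ∈ P, s < v) :
    P.card * (2 * s + P.card + 1) ≤ 2 * ∑ v ∈ P, v := by
  induction P using Finset.induction_on_max with
  | empty => simp
  | insert a P ha ih =>
    have haP : a ∉ P := fun h => lt_irrefl a (ha a h)
    have hsub : P ⊆ Ioo s a := by
      intro x hx
      exact mem_Ioo.mpr ⟨hP x (mem_insert_of_mem hx), ha x hx⟩
    have hcard : P.card ≤ a - s - 1 := by
      have := card_le_card hsub
      simpa [Nat.card_Ioo] using this
    have hsa : s < a := hP a (mem_insert_self a P)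
    have hge : s + P.card + 1 ≤ a := by omega
    have ihP := ih (fun v hv => hP v (mem_insert_of_mem hv))
    rw [card_insert_of_notMem haP, sum_insert haP]
    nlinarith [ihP, hge]

open Finset in
/-- Monotonicity of the rainbow property in the number of colors. -/
lemma hasRainbowProp_mono (m n r s : ℕ) (hr : 1 ≤ r) (hrs : r ≤ s)
    (h : HasRainbowProp m n r) : HasRainbowProp m n s := by
  intro χ hχ
  have hexact : ExactColoring n r (fun x => min (χ x) r) := by
    constructor
    · intro x hx
      have h1 := hχ.1 x hx
      rw [mem_Icc] at h1
      show min (χ x) r ∈ Icc 1 r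
      rw [mem_Icc]
      exact ⟨le_min h1.1 hr, min_le_right _ _⟩
    · intro c hc
      rw [mem_Icc] at hc
      obtain ⟨x, hx, hxc⟩ := hχ.2 c (mem_Icc.mpr ⟨hc.1, le_trans hc.2 hrs⟩)
      refine ⟨x, hx, ?_⟩
      show min (χ x) r = c
      rw [hxc]
      exact min_eq_left hc.2
  obtain ⟨a, hsol, hrb⟩ := h _ hexact
  exact ⟨a, hsol, fun i hi j hj hij hEq => hrb i hi j hj hij (by simp only [hEq])⟩

/-- Arithmetic endgame for the counting bound. -/
lemma arith_main (M T S L A C NN n : ℕ)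
    (h2T : T * 2 = (M + 4) * (M + 3))
    (hmain : n ≤ S + L + 2 * C)
    (hS : S * 2 ≤ (M + 2) * (M + 3) + 2 * ((M + 1) * A))
    (hL : L ≤ M + 2 + A)
    (hsplit : A + C = NN) :
    n + 1 ≤ T + (M + 2) * NN := by
  nlinarith [Nat.zero_le (M * C)]

/-- Arithmetic endgame for the construction, case `t = m - 2`. -/
lemma arith_cons1 (M T k K md n : ℕ)
    (h2T : T * 2 = (M + 4) * (M + 3))
    (hn : T + (K + md) = n) (hmd : md < M + 2) (hK : (M + 2) * k = K)
    (hle : (M + 2) * (2 * (k + 2) + (M + 2) + 1) + 2 * 1 ≤ 2 * n) : False := by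
  nlinarith

/-- Arithmetic endgame for the construction, case `t = m - 1`. -/
lemma arith_cons2 (M T k K md n : ℕ)
    (h2T : T * 2 = (M + 4) * (M + 3))
    (hn : T + (K + md) = n) (hmd : md < M + 2) (hK : (M + 2) * k = K)
    (hle : (M + 3) * (2 * (k + 2) + (M + 3) + 1) + 2 * 0 ≤ 2 * n) : False := by
  nlinarith

open Finset in
/-- **Key counting bound**: a rainbow-free exact `r`-coloring of `[1,n]` satisfies
`n + 1 ≤ m(m-1)/2 + (m-2)(n-r)`. -/
lemma rainbowfree_bound (m n r : ℕ) (hm : 4 ≤ m) (hn : m * (m - 1) / 2 ≤ n)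
    (χ : ℕ → ℕ) (hχ : ExactColoring n r χ)
    (hfree : ∀ a : ℕ → ℕ, IsSolutionEm m n a → ¬ IsRainbow m χ a) :
    n + 1 ≤ m * (m - 1) / 2 + (m - 2) * (n - r) := by
  obtain ⟨M, rfl⟩ : ∃ M, m = M + 4 := ⟨m - 4, by omega⟩
  obtain ⟨hmap, hsurj⟩ := hχ
  obtain ⟨T, hTdef⟩ : ∃ T, T = (M + 4) * (M + 4 - 1) / 2 := ⟨_, rfl⟩
  rw [← hTdef] at hn ⊢
  rw [show M + 4 - 2 = M + 2 from by omega]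
  have h2T : T * 2 = (M + 4) * (M + 3) := by
    rw [hTdef, show M + 4 - 1 = M + 3 from by omega]
    refine Nat.div_mul_cancel ?_
    have := two_dvd_mul_pred (M + 4)
    rwa [show M + 4 - 1 = M + 3 from by omega] at this
  have hT6 : 6 ≤ T := by nlinarith [h2T]
  have hTn : T ≤ n := hn
  have hn1 : 1 ≤ n := by omega
  haveI hdec : DecidablePred (fun x : ℕ => ∀ y ∈ Icc 1 n, χ y = χ x → x ≤ y) :=
    fun _ => Finset.decidableDforallFinset
  set W := (Icc 1 n).filter (fun x => ∀ y ∈ Icc 1 n, χ y = χ x → x ≤ y) with hWdef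
  set N := (Icc 1 n).filter (fun x => ¬ ∀ y ∈ Icc 1 n, χ y = χ x → x ≤ y) with hNdef
  have hWN : W.card + N.card = n := by
    rw [hWdef, hNdef, Finset.card_filter_add_card_filter_not, Nat.card_Icc]
    omega
  have hWmem : ∀ x ∈ W, x ∈ Icc 1 n := fun x hx => (mem_filter.mp hx).1
  have hWmin : ∀ x ∈ W, ∀ y ∈ Icc 1 n, χ y = χ x → x ≤ y := fun x hx => (mem_filter.mp hx).2
  have hWinj : ∀ x ∈ W, ∀ y ∈ W, χ x = χ y → x = y := by
    intro x hx y hy hxy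
    exact le_antisymm (hWmin x hx y (hWmem y hy) hxy.symm) (hWmin y hy x (hWmem x hx) hxy)
  have hdich : ∀ x ∈ Icc 1 n, x ∉ N → x ∈ W := by
    intro x hx hxN
    rw [hNdef, mem_filter, not_and] at hxN
    rw [hWdef, mem_filter]
    exact ⟨hx, not_not.mp (hxN hx)⟩
  have hWcard : W.card = r := by
    have himg : W.image χ = Icc 1 r := by
      apply Finset.Subset.antisymm
      · intro c hc
        obtain ⟨x, hx, rfl⟩ := mem_image.mp hc
        exact hmap x (hWmem x hx)
      · intro c hc
        obtain ⟨x, hx, hxc⟩ := hsurj c hc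
        have hne : ((Icc 1 n).filter (fun y => χ y = c)).Nonempty :=
          ⟨x, mem_filter.mpr ⟨hx, hxc⟩⟩
        have hx₀ := Finset.min'_mem _ hne
        rw [mem_filter] at hx₀
        refine mem_image.mpr ⟨_, mem_filter.mpr ⟨hx₀.1, ?_⟩, hx₀.2⟩
        intro y hy hyx
        exact Finset.min'_le _ y (mem_filter.mpr ⟨hy, by rw [hyx, hx₀.2]⟩)
    have h1 : W.card = (W.image χ).card :=
      (Finset.card_image_of_injOn (fun x hx y hy => hWinj x hx y hy)).symm
    rw [h1, himg, Nat.card_Icc]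
    omega
  have hone : (1 : ℕ) ∈ W :=
    mem_filter.mpr ⟨mem_Icc.mpr ⟨le_refl 1, hn1⟩, fun y hy _ => (mem_Icc.mp hy).1⟩
  by_cases hr : r < M + 2
  · -- degenerate case: very few colors
    have hrn : r ≤ n := by omega
    have hT2 : 3 * M + 12 ≤ T * 2 := by nlinarith [h2T]
    have h2 : 2 * (n - r) ≤ (M + 2) * (n - r) := by
      apply Nat.mul_le_mul_right
      omega
    generalize hE : (M + 2) * (n - r) = E at h2 ⊢
    omega
  push_neg at hr
  -- main case: at least m - 2 colors
  set e := W.orderIsoOfFin hWcard with hedef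
  set w : ℕ → ℕ := fun i => if h : i < r then (e ⟨i, h⟩ : ℕ) else 0 with hwdef
  have hwmem : ∀ i, i < r → w i ∈ W := by
    intro i h
    simp only [hwdef, dif_pos h]
    exact (e ⟨i, h⟩).2
  have hwlt : ∀ i j, i < j → j < r → w i < w j := by
    intro i j hij hj
    have hi : i < r := lt_trans hij hj
    simp only [hwdef, dif_pos hi, dif_pos hj]
    exact Subtype.coe_lt_coe.mpr (e.lt_iff_lt.mpr (by exact Fin.mk_lt_mk.mpr hij))
  have hwle : ∀ i j, i ≤ j → j < r → w i ≤ w j := by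
    intro i j hij hj
    rcases eq_or_lt_of_le hij with rfl | h
    · exact le_refl _
    · exact le_of_lt (hwlt i j h hj)
  have hwsurj : ∀ x ∈ W, ∃ i, ∃ h : i < r, w i = x := by
    intro x hx
    refine ⟨(e.symm ⟨x, hx⟩).1, (e.symm ⟨x, hx⟩).2, ?_⟩
    simp only [hwdef, dif_pos (e.symm ⟨x, hx⟩).2]
    rw [Fin.eta, OrderIso.apply_symm_apply]
  have h0r : 0 < r := by omega
  have hw0 : w 0 = 1 := by
    obtain ⟨i, hi, hwi⟩ := hwsurj 1 hone
    have h1 : 1 ≤ w 0 := (mem_Icc.mp (hWmem _ (hwmem 0 h0r))).1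
    have h2 : w 0 ≤ 1 := by
      rcases Nat.eq_zero_or_pos i with rfl | hpos
      · omega
      · have := hwlt 0 i hpos hi; omega
    omega
  obtain ⟨wl, hwldef⟩ : ∃ wl, wl = w (M + 1) := ⟨_, rfl⟩
  have hwln : wl ≤ n := by
    rw [hwldef]; exact (mem_Icc.mp (hWmem _ (hwmem (M + 1) (by omega)))).2
  have hwl1 : 1 ≤ wl := by
    rw [hwldef]; exact (mem_Icc.mp (hWmem _ (hwmem (M + 1) (by omega)))).1
  obtain ⟨A, hAdef⟩ : ∃ A, A = (N.filter (fun x => x ≤ wl)).card := ⟨_, rfl⟩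
  -- upper bound for the i-th smallest class minimum
  have hwub : ∀ i, i ≤ M + 1 → w i ≤ i + 1 + A := by
    intro i hi
    have hir : i < r := by omega
    have hsub : Icc 1 (w i) ⊆ ((range (i + 1)).image w) ∪ (N.filter (fun x => x ≤ wl)) := by
      intro x hx
      rw [mem_Icc] at hx
      have hwiwl : w i ≤ wl := by rw [hwldef]; exact hwle i (M + 1) hi (by omega)
      have hxn : x ∈ Icc 1 n := mem_Icc.mpr ⟨hx.1, le_trans hx.2 (le_trans hwiwl hwln)⟩
      by_cases hxN : x ∈ N
      · exact mem_union_right _ (mem_filter.mpr ⟨hxN, le_trans hx.2 hwiwl⟩)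
      · have hxW : x ∈ W := hdich x hxn hxN
        obtain ⟨j, hj, hwj⟩ := hwsurj x hxW
        have hji : j ≤ i := by
          by_contra hc
          push_neg at hc
          have := hwlt i j hc hj
          omega
        exact mem_union_left _ (mem_image.mpr ⟨j, mem_range.mpr (by omega), hwj⟩)
    have hcard := card_le_card hsub
    rw [Nat.card_Icc] at hcard
    have h1 := card_union_le ((range (i + 1)).image w) (N.filter (fun x => x ≤ wl))
    have h2 := Finset.card_image_le (s := range (i + 1)) (f := w)
    rw [card_range] at h2
    omega
  obtain ⟨S, hSdef⟩ : ∃ S, S = ∑ i ∈ range (M + 2), w i := ⟨_, rfl⟩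
  have hS1 : 1 ≤ S := by
    have h1 : w 0 ≤ ∑ i ∈ range (M + 2), w i :=
      Finset.single_le_sum (f := w) (fun i _ => Nat.zero_le _) (mem_range.mpr (by omega))
    omega
  have hSub : S * 2 ≤ (M + 2) * (M + 3) + 2 * ((M + 1) * A) := by
    have hsplit : (∑ i ∈ range (M + 2), w i) = w 0 + ∑ i ∈ Ico 1 (M + 2), w i := by
      rw [range_eq_Ico]
      exact Finset.sum_eq_sum_Ico_succ_bot (by omega) w
    have hterm : ∀ i ∈ Ico 1 (M + 2), w i ≤ i + 1 + A := by
      intro i hi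
      rw [mem_Ico] at hi
      exact hwub i (by omega)
    have h2 : ∑ i ∈ Ico 1 (M + 2), w i ≤ ∑ i ∈ Ico 1 (M + 2), (i + 1 + A) :=
      Finset.sum_le_sum hterm
    have h3 : ∑ i ∈ Ico 1 (M + 2), (i + 1 + A)
        = (∑ i ∈ Ico 1 (M + 2), i) + (M + 1) * (1 + A) := by
      rw [Finset.sum_add_distrib, Finset.sum_add_distrib, Finset.sum_const, Finset.sum_const,
        Nat.card_Ico, smul_eq_mul, smul_eq_mul, show M + 2 - 1 = M + 1 from by omega]
      ring
    have h4 : (∑ i ∈ Ico 1 (M + 2), i) * 2 = (M + 2) * (M + 1) := by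
      have he : ∑ i ∈ Ico 1 (M + 2), i = ∑ i ∈ range (M + 2), i := by
        rw [range_eq_Ico, Finset.sum_eq_sum_Ico_succ_bot (by omega : 0 < M + 2)]
        simp
      rw [he, Finset.sum_range_id_mul_two]
      simp
    have h5 : (∑ i ∈ Ico 1 (M + 2), w i) * 2 ≤ (M + 2) * (M + 1) + (M + 1) * (1 + A) * 2 := by
      omega
    rw [hSdef, hsplit, hw0]
    nlinarith [h5]
  have hwlub : wl ≤ M + 2 + A := by
    have := hwub (M + 1) (le_refl _)
    omega
  obtain ⟨C, hCdef⟩ : ∃ C, C = (N.filter (fun x => ¬ x ≤ wl)).card := ⟨_, rfl⟩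
  have hNsplit : A + C = N.card := by
    rw [hAdef, hCdef]
    exact Finset.card_filter_add_card_filter_not _
  -- the key combinatorial step
  have hkey : Icc (S + wl + 1) n ⊆
      (N.filter (fun x => ¬ x ≤ wl)) ∪ (N.filter (fun x => ¬ x ≤ wl)).image
        (· + (∑ i ∈ range (M + 2), w i)) := by
    intro v hv
    rw [mem_Icc, hSdef] at hv
    by_cases hvN : v ∈ N
    · exact mem_union_left _ (mem_filter.mpr ⟨hvN, by omega⟩)
    have hvI : v ∈ Icc 1 n := mem_Icc.mpr ⟨by omega, hv.2⟩
    have hvW : v ∈ W := hdich v hvI hvN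
    have hσ1 : 1 ≤ ∑ i ∈ range (M + 2), w i := by omega
    have huv : (v - ∑ i ∈ range (M + 2), w i) + ∑ i ∈ range (M + 2), w i = v := by omega
    obtain ⟨u, hudef⟩ : ∃ u, u = v - ∑ i ∈ range (M + 2), w i := ⟨_, rfl⟩
    rw [← hudef] at huv
    have huwl : wl < u := by omega
    have huI : u ∈ Icc 1 n := mem_Icc.mpr ⟨by omega, by omega⟩
    by_cases huN : u ∈ N
    · exact mem_union_right _ (mem_image.mpr ⟨u, mem_filter.mpr ⟨huN, by omega⟩, huv⟩)
    have huW : u ∈ W := hdich u huI huN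
    exfalso
    -- build a rainbow solution w 0, …, w (M+1), u with target v
    set a : ℕ → ℕ := fun i => if i ≤ M + 2 then w (i - 1) else if i = M + 3 then u else v
      with hadef
    have haval : ∀ i, 1 ≤ i → i ≤ M + 2 → a i = w (i - 1) := by
      intro i h1 h2
      simp only [hadef, if_pos h2]
    have ham1 : a (M + 3) = u := by
      simp only [hadef]
      rw [if_neg (by omega)]
      simp
    have ham : a (M + 4) = v := by
      simp only [hadef]
      rw [if_neg (by omega), if_neg (by omega)]
    have hvalsW : ∀ i ∈ Icc 1 (M + 4), a i ∈ W := by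
      intro i hi
      rw [mem_Icc] at hi
      rcases Nat.lt_or_ge i (M + 3) with h | h
      · rw [haval i hi.1 (by omega)]
        exact hwmem _ (by omega)
      · rcases Nat.eq_or_lt_of_le h with h3 | h3
        · rw [← h3, ham1]; exact huW
        · have h4 : i = M + 4 := by omega
          rw [h4, ham]; exact hvW
    have hvle : ∀ i, 1 ≤ i → i ≤ M + 2 → a i ≤ wl := by
      intro i h1 h2
      rw [haval i h1 h2, hwldef]
      exact hwle (i - 1) (M + 1) (by omega) (by omega)
    have huvlt : u < v := by omega
    have hainj : ∀ i ∈ Icc 1 (M + 4), ∀ j ∈ Icc 1 (M + 4), a i = a j → i = j := by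
      intro i hi j hj hij
      rw [mem_Icc] at hi hj
      by_contra hne
      have hcases : ∀ p q : ℕ, 1 ≤ p → 1 ≤ q → p ≤ M + 4 → q ≤ M + 4 → p < q →
          a p = a q → False := by
        intro p q hp1 hq1 hpM hqM hpq heq
        rcases Nat.lt_or_ge q (M + 3) with hq | hq
        · rw [haval p hp1 (by omega), haval q hq1 (by omega)] at heq
          have := hwlt (p - 1) (q - 1) (by omega) (by omega)
          omega
        · rcases Nat.eq_or_lt_of_le hq with hq3 | hq3
          · rw [← hq3] at heq
            rw [ham1] at heq
            have := hvle p hp1 (by omega)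
            omega
          · have hq4 : q = M + 4 := by omega
            rw [hq4, ham] at heq
            rcases Nat.lt_or_ge p (M + 3) with hp | hp
            · have := hvle p hp1 (by omega)
              omega
            · have hp3 : p = M + 3 := by omega
              rw [hp3, ham1] at heq
              omega
      rcases Nat.lt_or_ge i j with h | h
      · exact hcases i j hi.1 hj.1 hi.2 hj.2 h hij
      · exact hcases j i hj.1 hi.1 hj.2 hi.2 (by omega) hij.symm
    have hsol : IsSolutionEm (M + 4) n a := by
      constructor
      · intro i hi
        exact hWmem _ (hvalsW i hi)
      · have hIcc : Icc 1 (M + 4 - 1) = insert (M + 3) (Icc 1 (M + 2)) := by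
          ext x
          simp only [mem_Icc, mem_insert]
          omega
        rw [hIcc, Finset.sum_insert (by simp [mem_Icc])]
        have hbase : ∑ i ∈ Icc 1 (M + 2), a i = ∑ i ∈ range (M + 2), w i := by
          have h1 : ∀ i ∈ Icc 1 (M + 2), a i = w (i - 1) := by
            intro i hi
            rw [mem_Icc] at hi
            exact haval i hi.1 hi.2
          rw [Finset.sum_congr rfl h1, ← Finset.Ico_add_one_right_eq_Icc, Finset.sum_Ico_eq_sum_range]
          have hrr : M + 2 + 1 - 1 = M + 2 := by omega
          rw [hrr]
          apply Finset.sum_congr rfl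
          intro x _
          congr 1
          omega
        rw [hbase, ham1, ham]
        omega
    refine hfree a hsol ?_
    intro i hi j hj hij hEq
    exact hij (hainj i hi j hj (hWinj _ (hvalsW i hi) _ (hvalsW j hj) hEq))
  -- count
  have hc1 := card_le_card hkey
  have hc2 : ((N.filter (fun x => ¬ x ≤ wl)) ∪ (N.filter (fun x => ¬ x ≤ wl)).image
      (· + (∑ i ∈ range (M + 2), w i))).card ≤ C + C := by
    refine le_trans (card_union_le _ _) ?_
    have h1 := Finset.card_image_le (s := N.filter (fun x => ¬ x ≤ wl))
      (f := (· + (∑ i ∈ range (M + 2), w i)))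
    omega
  rw [Nat.card_Icc] at hc1
  have hmain : n ≤ S + wl + 2 * C := by omega
  -- final arithmetic
  have hNr : n - r = N.card := by omega
  rw [hNr]
  exact arith_main M T S wl A C N.card n h2T hmain hSub hwlub hNsplit

open Finset in
/-- **Construction**: an exact `(n - k - 1)`-coloring of `[1,n]` without rainbow solution,
where `k = (n - T)/(m-2)`. -/
lemma construction (m n : ℕ) (hm : 4 ≤ m) (hn : m * (m - 1) / 2 ≤ n) :
    ¬ HasRainbowProp m n (n - (n - m * (m - 1) / 2) / (m - 2) - 1) := by
  obtain ⟨M, rfl⟩ : ∃ M, m = M + 4 := ⟨m - 4, by omega⟩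
  obtain ⟨T, hTdef⟩ : ∃ T, T = (M + 4) * (M + 4 - 1) / 2 := ⟨_, rfl⟩
  rw [← hTdef] at hn ⊢
  rw [show M + 4 - 2 = M + 2 from by omega]
  have h2T : T * 2 = (M + 4) * (M + 3) := by
    rw [hTdef, show M + 4 - 1 = M + 3 from by omega]
    refine Nat.div_mul_cancel ?_
    have := two_dvd_mul_pred (M + 4)
    rwa [show M + 4 - 1 = M + 3 from by omega] at this
  have hT6 : 6 ≤ T := by nlinarith [h2T]
  have hTn : T ≤ n := hn
  obtain ⟨k, hkdef⟩ : ∃ k, k = (n - T) / (M + 2) := ⟨_, rfl⟩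
  rw [← hkdef]
  obtain ⟨md, hdiv, hmod⟩ : ∃ md, (M + 2) * k + md = n - T ∧ md < M + 2 :=
    ⟨(n - T) % (M + 2), by rw [hkdef]; exact Nat.div_add_mod _ _, Nat.mod_lt _ (by omega)⟩
  have hk2 : 2 * k ≤ n - T := by
    calc 2 * k ≤ (M + 2) * k := Nat.mul_le_mul_right k (by omega)
    _ ≤ n - T := Nat.le.intro hdiv
  obtain ⟨K, hKdef⟩ : ∃ K, (M + 2) * k = K := ⟨_, rfl⟩
  rw [hKdef] at hdiv
  have hdiv' : T + (K + md) = n := by omega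
  have hkn : k + 6 ≤ n := by omega
  set χ : ℕ → ℕ := fun x => if x ≤ k + 2 then 1 else x - (k + 2) + 1 with hχdef
  have hχlow : ∀ y, y ≤ k + 2 → χ y = 1 := fun y hy => if_pos hy
  have hχhigh : ∀ y, ¬ y ≤ k + 2 → χ y = y - (k + 2) + 1 := fun y hy => if_neg hy
  intro h
  have hexact : ExactColoring n (n - k - 1) χ := by
    constructor
    · intro x hx
      rw [mem_Icc] at hx
      rw [mem_Icc]
      by_cases hxs : x ≤ k + 2
      · rw [hχlow x hxs]
        omega
      · rw [hχhigh x hxs]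
        omega
    · intro c hc
      rw [mem_Icc] at hc
      rcases Nat.eq_or_lt_of_le hc.1 with hc1 | hc1
      · refine ⟨1, mem_Icc.mpr ⟨le_refl 1, by omega⟩, ?_⟩
        rw [hχlow 1 (by omega)]
        omega
      · refine ⟨c + (k + 2) - 1, mem_Icc.mpr ⟨by omega, by omega⟩, ?_⟩
        rw [hχhigh (c + (k + 2) - 1) (by omega)]
        omega
  obtain ⟨a, hsol, hrb⟩ := h χ hexact
  -- now derive a contradiction from the rainbow solution
  obtain ⟨hmem, hsum⟩ := hsol
  have hsub : Icc 1 (M + 4 - 1) ⊆ Icc 1 (M + 4) := Icc_subset_Icc (le_refl _) (by omega)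
  set F := (Icc 1 (M + 4 - 1)).filter (fun i => k + 2 < a i) with hFdef
  set F' := (Icc 1 (M + 4 - 1)).filter (fun i => ¬ k + 2 < a i) with hF'def
  have hsplitF : F.card + F'.card = M + 3 := by
    rw [hFdef, hF'def, Finset.card_filter_add_card_filter_not, Nat.card_Icc]
    omega
  have hF'1 : F'.card ≤ 1 := by
    rw [Finset.card_le_one]
    intro i hi j hj
    rw [hF'def, mem_filter] at hi hj
    by_contra hne
    refine hrb i (hsub hi.1) j (hsub hj.1) hne ?_
    rw [hχlow _ (not_lt.mp hi.2), hχlow _ (not_lt.mp hj.2)]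
  have hainj : ∀ i ∈ F, ∀ j ∈ F, a i = a j → i = j := by
    intro i hi j hj hij
    by_contra hne
    rw [hFdef, mem_filter] at hi hj
    exact hrb i (hsub hi.1) j (hsub hj.1) hne (by rw [hij])
  have hVcard : (F.image a).card = F.card :=
    Finset.card_image_of_injOn (fun x hx y hy => hainj x hx y hy)
  have hVsum : ∑ v ∈ F.image a, v = ∑ i ∈ F, a i :=
    Finset.sum_image (fun x hx y hy => hainj x hx y hy)
  have hVlt : ∀ v ∈ F.image a, k + 2 < v := by
    intro v hv
    obtain ⟨i, hi, rfl⟩ := mem_image.mp hv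
    exact (mem_filter.mp hi).2
  have hlow := sum_ge_of_forall_lt (k + 2) (F.image a) hVlt
  rw [hVcard, hVsum] at hlow
  have hF'sum : F'.card ≤ ∑ i ∈ F', a i := by
    calc F'.card = ∑ _i ∈ F', 1 := by rw [Finset.sum_const, smul_eq_mul]; omega
    _ ≤ ∑ i ∈ F', a i := by
        apply Finset.sum_le_sum
        intro i hi
        rw [hF'def, mem_filter] at hi
        exact (mem_Icc.mp (hmem i (hsub hi.1))).1
  have htot : ∑ i ∈ F, a i + ∑ i ∈ F', a i = ∑ i ∈ Icc 1 (M + 4 - 1), a i := by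
    rw [hFdef, hF'def]
    exact Finset.sum_filter_add_sum_filter_not _ _ _
  have ham : a (M + 4) ≤ n :=
    (mem_Icc.mp (hmem (M + 4) (mem_Icc.mpr ⟨by omega, le_refl _⟩))).2
  have hFcard : M + 2 ≤ F.card := by omega
  have hFcard2 : F.card ≤ M + 3 := by omega
  have hnlb : F.card * (2 * (k + 2) + F.card + 1) + 2 * F'.card ≤ 2 * n := by
    have h1 : ∑ i ∈ Icc 1 (M + 4 - 1), a i = a (M + 4) := hsum
    omega
  rcases Nat.eq_or_lt_of_le hFcard with hF1 | hF1
  · have hF'c : F'.card = 1 := by omega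
    rw [← hF1, hF'c] at hnlb
    exact arith_cons1 M T k K md n h2T hdiv' hmod hKdef hnlb
  · have hFc : F.card = M + 3 := by omega
    have hF'c : F'.card = 0 := by omega
    rw [hFc, hF'c] at hnlb
    exact arith_cons2 M T k K md n h2T hdiv' hmod hKdef hnlb

open Finset in
/-- For m ≥ 4 and n ≥ m(m-1)/2,
RS_m(n) = ⌈((m-3)n + m(m-1)/2)/(m-2)⌉: the ceiling is the least number of colors r ≥ 1
such that every exact r-coloring of [1,n] contains a rainbow solution to E_m. -/
theorem rainbow_schur_number_value (m n : ℕ) (hm : 4 ≤ m) (hn : m * (m - 1) / 2 ≤ n) :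
    ∃ R : ℕ,
      (R : ℤ) = ⌈(((m : ℚ) - 3) * n + (m : ℚ) * ((m : ℚ) - 1) / 2) / ((m : ℚ) - 2)⌉ ∧
      IsLeast {r : ℕ | 1 ≤ r ∧ HasRainbowProp m n r} R := by
  obtain ⟨T, hTdef⟩ : ∃ T, T = m * (m - 1) / 2 := ⟨_, rfl⟩
  have h2T : T * 2 = m * (m - 1) := by
    rw [hTdef]; exact Nat.div_mul_cancel (two_dvd_mul_pred m)
  have h12 : 4 * 3 ≤ m * (m - 1) := Nat.mul_le_mul hm (by omega)
  have hT6 : 6 ≤ T := by omega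
  have hTn : T ≤ n := by rw [hTdef]; exact hn
  obtain ⟨k, hkdef⟩ : ∃ k, k = (n - T) / (m - 2) := ⟨_, rfl⟩
  obtain ⟨md, hdiv, hmod⟩ : ∃ md, (m - 2) * k + md = n - T ∧ md < m - 2 :=
    ⟨(n - T) % (m - 2), by rw [hkdef]; exact Nat.div_add_mod _ _, Nat.mod_lt _ (by omega)⟩
  have hk2 : 2 * k ≤ n - T := by
    calc 2 * k ≤ (m - 2) * k := Nat.mul_le_mul_right k (by omega)
    _ ≤ n - T := Nat.le.intro hdiv
  have hkn : k + 6 ≤ n := by omega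
  refine ⟨n - k, ?_, ⟨⟨by omega, ?_⟩, ?_⟩⟩
  · -- the ceiling identity
    have hc2 : (0 : ℚ) < (m : ℚ) - 2 := by
      have h4 : (4 : ℚ) ≤ (m : ℚ) := by exact_mod_cast hm
      linarith
    rw [eq_comm, Int.ceil_eq_iff]
    have hcast : ((n - k : ℕ) : ℤ) = (n : ℤ) - k := by
      have : k ≤ n := by omega
      push_cast [Nat.cast_sub this]
      ring
    rw [hcast]
    have h1 : ((m - 2 : ℕ) : ℚ) = (m : ℚ) - 2 := by
      have h2m : (2 : ℕ) ≤ m := by omega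
      push_cast [Nat.cast_sub h2m]
      ring
    have h1m : ((m - 1 : ℕ) : ℚ) = (m : ℚ) - 1 := by
      have h1m' : (1 : ℕ) ≤ m := by omega
      push_cast [Nat.cast_sub h1m']
      ring
    have h2 : ((n - T : ℕ) : ℚ) = (n : ℚ) - T := by
      push_cast [Nat.cast_sub hTn]
      ring
    have hTq : (T : ℚ) * 2 = (m : ℚ) * ((m : ℚ) - 1) := by
      have h3 : ((T * 2 : ℕ) : ℚ) = ((m * (m - 1) : ℕ) : ℚ) := by exact_mod_cast h2T
      push_cast at h3
      rw [h1m] at h3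
      exact_mod_cast h3
    have hdivq : ((m : ℚ) - 2) * k + (md : ℚ) = (n : ℚ) - T := by
      calc ((m : ℚ) - 2) * k + (md : ℚ)
          = (((m - 2) * k + md : ℕ) : ℚ) := by push_cast [h1]; ring
      _ = ((n - T : ℕ) : ℚ) := by exact_mod_cast congrArg (Nat.cast : ℕ → ℚ) hdiv
      _ = (n : ℚ) - T := h2
    have hmodq : ((md : ℕ) : ℚ) < (m : ℚ) - 2 := by
      rw [← h1]
      exact_mod_cast hmod
    have hmodq0 : (0 : ℚ) ≤ ((md : ℕ) : ℚ) := by positivity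
    constructor
    · rw [lt_div_iff₀ hc2]
      push_cast
      nlinarith [hdivq, hmodq, hTq]
    · rw [div_le_iff₀ hc2]
      push_cast
      nlinarith [hdivq, hmodq0, hTq]
  · -- HasRainbowProp m n (n - k)
    intro χ hχ
    by_contra hno
    push_neg at hno
    have hfree : ∀ a : ℕ → ℕ, IsSolutionEm m n a → ¬ IsRainbow m χ a := by
      intro a hs hr
      exact (hno a hs) hr
    have hb := rainbowfree_bound m n (n - k) hm hn χ hχ hfree
    have heq : n - (n - k) = k := by omega
    rw [heq, ← hTdef] at hb
    have hfin : (m - 2) * k ≤ n - T := Nat.le.intro hdiv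
    generalize hKK : (m - 2) * k = K at hb hfin
    omega
  · -- lower bound
    rintro r ⟨hr1, hrp⟩
    by_contra hlt
    push_neg at hlt
    have hrle : r ≤ n - k - 1 := by omega
    have h1 : HasRainbowProp m n (n - k - 1) := hasRainbowProp_mono m n r _ hr1 hrle hrp
    have h2 := construction m n hm hn
    rw [← hTdef, ← hkdef] at h2
    exact h2 h1
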